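/- Let L = log₂3. There exist real numbers α₁, α₂ with 0 < α₁ < α₂ < 1 and α₁ < 1/3 such that (1/2)·α₂·H(α₁/α₂) + (1−α₂) + (α₂−α₁)·L = (1−α₂)·L, and (1−α₁) + H(α₁) = (1/2)·H(α₂) + (1−α₂)·L, and (1−α₁) + H(α₁) ≤ log₂(2.8569). (This shows that the two-parameter quantum divide-and-conquer algorithm runs in time O*(γ₂ⁿ) with γ₂ ≤ 2.8569.) -/

import Mathlib

/-- The binary entropy function `H(x) = -x·log₂ x - (1-x)·log₂(1-x)`
(with the convention `log₂ 0 = 0`, so `H(0) = H(1) = 0`). -/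
noncomputable def binEntropy (x : ℝ) : ℝ :=
  -x * Real.logb 2 x - (1 - x) * Real.logb 2 (1 - x)

lemma binEntropy_eq (x : ℝ) : binEntropy x = Real.binEntropy x / Real.log 2 := by
  rw [binEntropy, Real.binEntropy, Real.logb, Real.logb, Real.log_inv, Real.log_inv]
  ring

lemma binEntropy_continuous : Continuous binEntropy := by
  have : binEntropy = fun x => Real.binEntropy x / Real.log 2 := funext binEntropy_eq
  rw [this]
  exact Real.binEntropy_continuous.div_const _

lemma binEntropy_nonneg {x : ℝ} (h0 : 0 ≤ x) (h1 : x ≤ 1) : 0 ≤ binEntropy x := by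
  rw [binEntropy_eq]
  have := Real.binEntropy_nonneg h0 h1
  positivity

lemma binEntropy_mono {x y : ℝ} (hx : 0 ≤ x) (hxy : x ≤ y) (hy : y ≤ 1/2) :
    binEntropy x ≤ binEntropy y := by
  rw [binEntropy_eq, binEntropy_eq]
  have h2 : (0:ℝ) < Real.log 2 := Real.log_pos (by norm_num)
  have h2i : (2:ℝ)⁻¹ = 1/2 := by norm_num
  have hm : Real.binEntropy x ≤ Real.binEntropy y := by
    rcases eq_or_lt_of_le hxy with rfl | hlt
    · exact le_refl _
    · exact le_of_lt (Real.binEntropy_strictMonoOn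
        ⟨hx, by rw [h2i]; linarith⟩ ⟨le_trans hx hxy, by rw [h2i]; linarith⟩ hlt)
  gcongr

lemma binEntropy_anti {x y : ℝ} (hx : 1/2 ≤ x) (hxy : x ≤ y) (hy : y ≤ 1) :
    binEntropy y ≤ binEntropy x := by
  rw [binEntropy_eq, binEntropy_eq]
  have h2 : (0:ℝ) < Real.log 2 := Real.log_pos (by norm_num)
  have h2i : (2:ℝ)⁻¹ = 1/2 := by norm_num
  have hm : Real.binEntropy y ≤ Real.binEntropy x := by
    rcases eq_or_lt_of_le hxy with rfl | hlt
    · exact le_refl _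
    · exact le_of_lt (Real.binEntropy_strictAntiOn
        ⟨by rw [h2i]; linarith, le_trans hxy hy⟩ ⟨by rw [h2i]; linarith, hy⟩ hlt)
  gcongr

lemma le_logb2 (x : ℝ) (hx : 0 < x) (m1 m2 n : ℕ) (hn : 0 < n)
    (h : (2:ℝ)^m1 ≤ x^n * 2^m2) : ((m1:ℝ) - m2)/n ≤ Real.logb 2 x := by
  rw [Real.le_logb_iff_rpow_le (by norm_num) hx]
  set t : ℝ := ((m1:ℝ) - m2)/n with ht
  have hnR : (n:ℝ) ≠ 0 := Nat.cast_ne_zero.mpr hn.ne'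
  have key : ((2:ℝ) ^ t) ^ n ≤ x ^ n := by
    rw [← Real.rpow_natCast ((2:ℝ)^t) n, ← Real.rpow_mul (by norm_num)]
    have : t * n = (m1:ℝ) - m2 := by rw [ht]; field_simp
    rw [this, Real.rpow_sub (by norm_num), Real.rpow_natCast, Real.rpow_natCast]
    rw [div_le_iff₀ (by positivity)]
    linarith [h]
  have h2t : (0:ℝ) ≤ (2:ℝ) ^ t := (Real.rpow_pos_of_pos (by norm_num) t).le
  exact (pow_le_pow_iff_left₀ h2t hx.le hn.ne').mp key

lemma logb2_le (x : ℝ) (hx : 0 < x) (m1 m2 n : ℕ) (hn : 0 < n)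
    (h : x^n * 2^m2 ≤ (2:ℝ)^m1) : Real.logb 2 x ≤ ((m1:ℝ) - m2)/n := by
  rw [Real.logb_le_iff_le_rpow (by norm_num) hx]
  set t : ℝ := ((m1:ℝ) - m2)/n with ht
  have hnR : (n:ℝ) ≠ 0 := Nat.cast_ne_zero.mpr hn.ne'
  have key : x ^ n ≤ ((2:ℝ) ^ t) ^ n := by
    rw [← Real.rpow_natCast ((2:ℝ)^t) n, ← Real.rpow_mul (by norm_num)]
    have : t * n = (m1:ℝ) - m2 := by rw [ht]; field_simp
    rw [this, Real.rpow_sub (by norm_num), Real.rpow_natCast, Real.rpow_natCast]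
    rw [le_div_iff₀ (by positivity)]
    linarith [h]
  have h2t : (0:ℝ) ≤ (2:ℝ) ^ t := (Real.rpow_pos_of_pos (by norm_num) t).le
  exact (pow_le_pow_iff_left₀ hx.le h2t hn.ne').mp key

lemma pow_split (x : ℝ) (n : ℕ) (h : 256 < n) : x ^ n = (x ^ 256) ^ (n / 256) * x ^ (n % 256) := by
  rw [← pow_mul, ← pow_add, Nat.div_add_mod]

set_option maxHeartbeats 4000000

noncomputable def Afun (r : ℝ) : ℝ :=
  (Real.logb 2 3 - 1) / (binEntropy r / 2 + (2 - r) * Real.logb 2 3 - 1)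

noncomputable def phiFun (r : ℝ) : ℝ :=
  (1 - r * Afun r) + binEntropy (r * Afun r)
    - (1 / 2 * binEntropy (Afun r) + (1 - Afun r) * Real.logb 2 3)

/-- Two-parameter quantum divide-and-conquer: there are `0 < α₁ < α₂ < 1`, `α₁ < 1/3`,
balancing the recurrences, with exponent at most `log₂ 2.8569`. -/
theorem stmt_14 :
    ∃ α₁ α₂ : ℝ, 0 < α₁ ∧ α₁ < α₂ ∧ α₂ < 1 ∧ α₁ < 1 / 3 ∧
      (1 / 2) * α₂ * binEntropy (α₁ / α₂) + (1 - α₂) + (α₂ - α₁) * Real.logb 2 3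
        = (1 - α₂) * Real.logb 2 3 ∧
      (1 - α₁) + binEntropy α₁ = (1 / 2) * binEntropy α₂ + (1 - α₂) * Real.logb 2 3 ∧
      (1 - α₁) + binEntropy α₁ ≤ Real.logb 2 2.8569 := by
  have hL1 : (((50508 : ℝ)/31867)) ≤ Real.logb 2 3 := by
    have h := le_logb2 3 (by norm_num) 50508 0 31867 (by norm_num) (by simp (disch := norm_num) only [pow_split]; norm_num)
    norm_num at h ⊢
    linarith only [h]
  have hL2 : Real.logb 2 3 ≤ (((24727 : ℝ)/15601)) := by
    have h := logb2_le 3 (by norm_num) 24727 0 15601 (by norm_num) (by simp (disch := norm_num) only [pow_split]; norm_num)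
    norm_num at h ⊢
    linarith only [h]
  have lg1 : Real.logb 2 0.576122 ≤ ((0 : ℝ) - 1646)/2069 := by
    exact_mod_cast logb2_le 0.576122 (by norm_num) 0 1646 2069 (by norm_num) (by simp (disch := norm_num) only [pow_split]; norm_num)
  have lg2 : Real.logb 2 0.423878 ≤ ((0 : ℝ) - 1928)/1557 := by
    exact_mod_cast logb2_le 0.423878 (by norm_num) 0 1928 1557 (by norm_num) (by simp (disch := norm_num) only [pow_split]; norm_num)
  have lg4 : ((0 : ℝ) - 2004)/2519 ≤ Real.logb 2 0.576122 := by
    exact_mod_cast le_logb2 0.576122 (by norm_num) 0 2004 2519 (by norm_num) (by simp (disch := norm_num) only [pow_split]; norm_num)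
  have lg5 : ((0 : ℝ) - 2245)/1813 ≤ Real.logb 2 0.423878 := by
    exact_mod_cast le_logb2 0.423878 (by norm_num) 0 2245 1813 (by norm_num) (by simp (disch := norm_num) only [pow_split]; norm_num)
  have lg7 : Real.logb 2 0.576128 ≤ ((0 : ℝ) - 3673)/4617 := by
    exact_mod_cast logb2_le 0.576128 (by norm_num) 0 3673 4617 (by norm_num) (by simp (disch := norm_num) only [pow_split]; norm_num)
  have lg8 : Real.logb 2 0.423872 ≤ ((0 : ℝ) - 3466)/2799 := by
    exact_mod_cast logb2_le 0.423872 (by norm_num) 0 3466 2799 (by norm_num) (by simp (disch := norm_num) only [pow_split]; norm_num)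
  have lg10 : ((0 : ℝ) - 214)/269 ≤ Real.logb 2 0.576128 := by
    exact_mod_cast le_logb2 0.576128 (by norm_num) 0 214 269 (by norm_num) (by simp (disch := norm_num) only [pow_split]; norm_num)
  have lg11 : ((0 : ℝ) - 2593)/2094 ≤ Real.logb 2 0.423872 := by
    exact_mod_cast le_logb2 0.423872 (by norm_num) 0 2593 2094 (by norm_num) (by simp (disch := norm_num) only [pow_split]; norm_num)
  have lg13 : ((0 : ℝ) - 5128)/2159 ≤ Real.logb 2 0.192753165 := by
    exact_mod_cast le_logb2 0.192753165 (by norm_num) 0 5128 2159 (by norm_num) (by simp (disch := norm_num) only [pow_split]; norm_num)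
  have lg14 : ((0 : ℝ) - 717)/2321 ≤ Real.logb 2 0.807246835 := by
    exact_mod_cast le_logb2 0.807246835 (by norm_num) 0 717 2321 (by norm_num) (by simp (disch := norm_num) only [pow_split]; norm_num)
  have lg16 : Real.logb 2 0.334570008 ≤ ((0 : ℝ) - 4821)/3052 := by
    exact_mod_cast logb2_le 0.334570008 (by norm_num) 0 4821 3052 (by norm_num) (by simp (disch := norm_num) only [pow_split]; norm_num)
  have lg17 : Real.logb 2 0.665429992 ≤ ((0 : ℝ) - 989)/1683 := by
    exact_mod_cast logb2_le 0.665429992 (by norm_num) 0 989 1683 (by norm_num) (by simp (disch := norm_num) only [pow_split]; norm_num)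
  have lg19 : Real.logb 2 0.192756326 ≤ ((0 : ℝ) - 5945)/2503 := by
    exact_mod_cast logb2_le 0.192756326 (by norm_num) 0 5945 2503 (by norm_num) (by simp (disch := norm_num) only [pow_split]; norm_num)
  have lg20 : Real.logb 2 0.807243674 ≤ ((0 : ℝ) - 637)/2062 := by
    exact_mod_cast logb2_le 0.807243674 (by norm_num) 0 637 2062 (by norm_num) (by simp (disch := norm_num) only [pow_split]; norm_num)
  have lg22 : ((0 : ℝ) - 3006)/1903 ≤ Real.logb 2 0.334572119 := by
    exact_mod_cast le_logb2 0.334572119 (by norm_num) 0 3006 1903 (by norm_num) (by simp (disch := norm_num) only [pow_split]; norm_num)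
  have lg23 : ((0 : ℝ) - 352)/599 ≤ Real.logb 2 0.665427881 := by
    exact_mod_cast le_logb2 0.665427881 (by norm_num) 0 352 599 (by norm_num) (by simp (disch := norm_num) only [pow_split]; norm_num)
  have lg25 : ((10795 : ℝ) - 0)/7128 ≤ Real.logb 2 2.8569 := by
    exact_mod_cast le_logb2 2.8569 (by norm_num) 10795 0 7128 (by norm_num) (by simp (disch := norm_num) only [pow_split]; norm_num)
  have hH3 : ((158368052119 : ℝ)/161071650000) ≤ binEntropy 0.576122 := by
    have e1 : (1 : ℝ) - 0.576122 = 0.423878 := by norm_num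
    unfold binEntropy
    rw [e1]
    linarith only [lg1, lg2]
  have hH6 : binEntropy 0.576122 ≤ ((320735157131 : ℝ)/326210500000) := by
    have e1 : (1 : ℝ) - 0.576122 = 0.423878 := by norm_num
    unfold binEntropy
    rw [e1]
    linarith only [lg4, lg5]
  have hH9 : ((4411817948 : ℝ)/4487146875) ≤ binEntropy 0.576128 := by
    have e1 : (1 : ℝ) - 0.576128 = 0.423872 := by norm_num
    unfold binEntropy
    rw [e1]
    linarith only [lg7, lg8]
  have hH12 : binEntropy 0.576128 ≤ ((8653595323 : ℝ)/8801343750) := by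
    have e1 : (1 : ℝ) - 0.576128 = 0.423872 := by norm_num
    unfold binEntropy
    rw [e1]
    linarith only [lg10, lg11]
  have hH15 : binEntropy 0.192753165 ≤ ((141751426177161 : ℝ)/200441560000000) := by
    have e1 : (1 : ℝ) - 0.192753165 = 0.807246835 := by norm_num
    unfold binEntropy
    rw [e1]
    linarith only [lg13, lg14]
  have hH18 : ((118079189507813 : ℝ)/128412900000000) ≤ binEntropy 0.334570008 := by
    have e1 : (1 : ℝ) - 0.334570008 = 0.665429992 := by norm_num
    unfold binEntropy
    rw [e1]
    linarith only [lg16, lg17]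
  have hH21 : ((1824999481923177 : ℝ)/2580593000000000) ≤ binEntropy 0.192756326 := by
    have e1 : (1 : ℝ) - 0.192756326 = 0.807243674 := by norm_num
    unfold binEntropy
    rw [e1]
    linarith only [lg19, lg20]
  have hH24 : binEntropy 0.334572119 ≤ ((524084704346911 : ℝ)/569948500000000) := by
    have e1 : (1 : ℝ) - 0.334572119 = 0.665427881 := by norm_num
    unfold binEntropy
    rw [e1]
    linarith only [lg22, lg23]
  -- block a
  have hp1a : (2 - 0.576122) * (((50508 : ℝ)/31867)) ≤ (2 - (0.576122)) * Real.logb 2 3 :=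
    mul_le_mul (by norm_num) hL1 (by norm_num) (by norm_num)
  have hp2a : (2 - (0.576122)) * Real.logb 2 3 ≤ (2 - 0.576122) * (((24727 : ℝ)/15601)) :=
    mul_le_mul (by norm_num) hL2 (le_trans (by norm_num) hL1) (by norm_num)
  have hG1a : ((89743139912833061 : ℝ)/51328702705500000) ≤ binEntropy (0.576122) / 2 + (2 - (0.576122)) * Real.logb 2 3 - 1 := by
    linarith only [hH3, hp1a]
  have hG2a : binEntropy (0.576122) / 2 + (2 - (0.576122)) * Real.logb 2 3 - 1 ≤ ((17795958642292557 : ℝ)/10178420021000000) := by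
    linarith only [hH6, hp2a]
  have hA1a : (0.334570008 : ℝ) ≤ Afun (0.576122) := by
    have h' : (((18641 : ℝ)/31867)) / (((17795958642292557 : ℝ)/10178420021000000)) ≤ (Real.logb 2 3 - 1) / (binEntropy (0.576122) / 2 + (2 - (0.576122)) * Real.logb 2 3 - 1) :=
      div_le_div₀ (by linarith only [hL1]) (by linarith only [hL1]) (by linarith only [hG1a]) hG2a
    have h'' : (0.334570008 : ℝ) ≤ (((18641 : ℝ)/31867)) / (((17795958642292557 : ℝ)/10178420021000000)) := by norm_num
    unfold Afun
    linarith only [h', h'']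
  have hA2a : Afun (0.576122) ≤ (0.334570046 : ℝ) := by
    have h' : (Real.logb 2 3 - 1) / (binEntropy (0.576122) / 2 + (2 - (0.576122)) * Real.logb 2 3 - 1) ≤ (((9126 : ℝ)/15601)) / (((89743139912833061 : ℝ)/51328702705500000)) :=
      div_le_div₀ (by norm_num) (by linarith only [hL2]) (by norm_num) hG1a
    have h'' : (((9126 : ℝ)/15601)) / (((89743139912833061 : ℝ)/51328702705500000)) ≤ (0.334570046 : ℝ) := by norm_num
    unfold Afun
    linarith only [h', h'']
  have hM1a : (0.192753142 : ℝ) ≤ (0.576122) * Afun (0.576122) := by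
    have h' : (0.576122 : ℝ) * 0.334570008 ≤ (0.576122) * Afun (0.576122) :=
      mul_le_mul (le_refl _) hA1a (by norm_num) (by norm_num)
    linarith only [h']
  have hM2a : (0.576122) * Afun (0.576122) ≤ (0.192753165 : ℝ) := by
    have h' : (0.576122) * Afun (0.576122) ≤ (0.576122 : ℝ) * 0.334570046 :=
      mul_le_mul (le_refl _) hA2a (by linarith only [hA1a]) (by norm_num)
    linarith only [h']

  -- block b
  have hp1b : (2 - 0.576128) * (((50508 : ℝ)/31867)) ≤ (2 - (0.576128)) * Real.logb 2 3 :=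
    mul_le_mul (by norm_num) hL1 (by norm_num) (by norm_num)
  have hp2b : (2 - (0.576128)) * Real.logb 2 3 ≤ (2 - 0.576128) * (((24727 : ℝ)/15601)) :=
    mul_le_mul (by norm_num) hL2 (le_trans (by norm_num) hL1) (by norm_num)
  have hG1b : ((1250028029743973 : ℝ)/714959547328125) ≤ binEntropy (0.576128) / 2 + (2 - (0.576128)) * Real.logb 2 3 - 1 := by
    linarith only [hH9, hp1b]
  have hG2b : binEntropy (0.576128) / 2 + (2 - (0.576128)) * Real.logb 2 3 - 1 ≤ ((96028418896787 : ℝ)/54923905537500) := by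
    linarith only [hH12, hp2b]
  have hA1b : (0.334572051 : ℝ) ≤ Afun (0.576128) := by
    have h' : (((18641 : ℝ)/31867)) / (((96028418896787 : ℝ)/54923905537500)) ≤ (Real.logb 2 3 - 1) / (binEntropy (0.576128) / 2 + (2 - (0.576128)) * Real.logb 2 3 - 1) :=
      div_le_div₀ (by linarith only [hL1]) (by linarith only [hL1]) (by linarith only [hG1b]) hG2b
    have h'' : (0.334572051 : ℝ) ≤ (((18641 : ℝ)/31867)) / (((96028418896787 : ℝ)/54923905537500)) := by norm_num
    unfold Afun
    linarith only [h', h'']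
  have hA2b : Afun (0.576128) ≤ (0.334572119 : ℝ) := by
    have h' : (Real.logb 2 3 - 1) / (binEntropy (0.576128) / 2 + (2 - (0.576128)) * Real.logb 2 3 - 1) ≤ (((9126 : ℝ)/15601)) / (((1250028029743973 : ℝ)/714959547328125)) :=
      div_le_div₀ (by norm_num) (by linarith only [hL2]) (by norm_num) hG1b
    have h'' : (((9126 : ℝ)/15601)) / (((1250028029743973 : ℝ)/714959547328125)) ≤ (0.334572119 : ℝ) := by norm_num
    unfold Afun
    linarith only [h', h'']
  have hM1b : (0.192756326 : ℝ) ≤ (0.576128) * Afun (0.576128) := by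
    have h' : (0.576128 : ℝ) * 0.334572051 ≤ (0.576128) * Afun (0.576128) :=
      mul_le_mul (le_refl _) hA1b (by norm_num) (by norm_num)
    linarith only [h']
  have hM2b : (0.576128) * Afun (0.576128) ≤ (0.192756366 : ℝ) := by
    have h' : (0.576128) * Afun (0.576128) ≤ (0.576128 : ℝ) * 0.334572119 :=
      mul_le_mul (le_refl _) hA2b (by linarith only [hA1b]) (by norm_num)
    linarith only [h']

  -- phi(a) < 0
  have hPa : (1 - (0.334570046 : ℝ)) * (((50508 : ℝ)/31867)) ≤ (1 - Afun 0.576122) * Real.logb 2 3 :=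
    mul_le_mul (by linarith only [hA2a]) hL1 (by norm_num) (by linarith only [hA2a])
  have hHra : binEntropy (0.576122 * Afun 0.576122) ≤ ((141751426177161 : ℝ)/200441560000000) :=
    le_trans (binEntropy_mono (by linarith only [hM1a]) hM2a (by norm_num)) hH15
  have hHAa : (((118079189507813 : ℝ)/128412900000000)) ≤ binEntropy (Afun 0.576122) :=
    le_trans hH18 (binEntropy_mono (by norm_num) hA1a (by linarith only [hA2a]))
  have hnegA : phiFun 0.576122 < 0 := by
    unfold phiFun
    linarith only [hM1a, hHra, hHAa, hPa]
  -- phi(b) > 0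
  have hPb : (1 - Afun 0.576128) * Real.logb 2 3 ≤ (1 - (0.334572051 : ℝ)) * (((24727 : ℝ)/15601)) :=
    mul_le_mul (by linarith only [hA1b]) hL2 (le_trans (by norm_num) hL1) (by norm_num)
  have hHrb : (((1824999481923177 : ℝ)/2580593000000000)) ≤ binEntropy (0.576128 * Afun 0.576128) :=
    le_trans hH21 (binEntropy_mono (by norm_num) hM1b (by linarith only [hM2b]))
  have hHAb : binEntropy (Afun 0.576128) ≤ ((524084704346911 : ℝ)/569948500000000) :=
    le_trans (binEntropy_mono (by linarith only [hA1b]) hA2b (by norm_num)) hH24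
  have hposB : 0 < phiFun 0.576128 := by
    unfold phiFun
    linarith only [hM2b, hHrb, hHAb, hPb]
  -- continuity and IVT
  have cg : Continuous (fun x : ℝ => binEntropy x / 2 + (2 - x) * Real.logb 2 3 - 1) :=
    ((binEntropy_continuous.div_const 2).add
      ((continuous_const.sub continuous_id).mul continuous_const)).sub continuous_const
  have hne : ∀ x ∈ Set.Icc (0.576122 : ℝ) 0.576128,
      binEntropy x / 2 + (2 - x) * Real.logb 2 3 - 1 ≠ 0 := by
    intro x hx
    have h0 : 0 ≤ binEntropy x := binEntropy_nonneg (by linarith only [hx.1]) (by linarith only [hx.2])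
    have hp : (2 - (0.576128 : ℝ)) * (((50508 : ℝ)/31867)) ≤ (2 - x) * Real.logb 2 3 :=
      mul_le_mul (by linarith only [hx.2]) hL1 (by norm_num) (by linarith only [hx.2])
    have : (0 : ℝ) < binEntropy x / 2 + (2 - x) * Real.logb 2 3 - 1 := by linarith only [hp, h0]
    exact ne_of_gt this
  have cA : ContinuousOn Afun (Set.Icc (0.576122 : ℝ) 0.576128) := by
    have hAe : Afun = fun r : ℝ =>
        (Real.logb 2 3 - 1) / (binEntropy r / 2 + (2 - r) * Real.logb 2 3 - 1) := rfl
    rw [hAe]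
    exact ContinuousOn.div continuousOn_const cg.continuousOn hne
  have cM : ContinuousOn (fun r : ℝ => r * Afun r) (Set.Icc (0.576122 : ℝ) 0.576128) :=
    continuousOn_id.mul cA
  have cphi : ContinuousOn phiFun (Set.Icc (0.576122 : ℝ) 0.576128) := by
    have hPe : phiFun = fun r : ℝ => (1 - r * Afun r) + binEntropy (r * Afun r)
        - (1 / 2 * binEntropy (Afun r) + (1 - Afun r) * Real.logb 2 3) := rfl
    rw [hPe]
    exact ((continuousOn_const.sub cM).add (binEntropy_continuous.comp_continuousOn cM)).sub
      ((continuousOn_const.mul (binEntropy_continuous.comp_continuousOn cA)).add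
        ((continuousOn_const.sub cA).mul continuousOn_const))
  obtain ⟨r₀, hr₀, hphi⟩ := intermediate_value_Icc
    (by norm_num : (0.576122 : ℝ) ≤ 0.576128) cphi ⟨hnegA.le, hposB.le⟩
  have hra : (0.576122 : ℝ) ≤ r₀ := hr₀.1
  have hrb : r₀ ≤ (0.576128 : ℝ) := hr₀.2
  have hBr1 : (((4411817948 : ℝ)/4487146875)) ≤ binEntropy r₀ :=
    le_trans hH9 (binEntropy_anti (by linarith only [hra]) hrb (by norm_num))
  have hBr2 : binEntropy r₀ ≤ (((320735157131 : ℝ)/326210500000)) :=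
    le_trans (binEntropy_anti (by norm_num) hra (by linarith only [hrb])) hH6
  -- block g
  have hp1g : (2 - 0.576128) * (((50508 : ℝ)/31867)) ≤ (2 - (r₀)) * Real.logb 2 3 :=
    mul_le_mul (by linarith only [hrb]) hL1 (by norm_num) (by linarith only [hrb])
  have hp2g : (2 - (r₀)) * Real.logb 2 3 ≤ (2 - 0.576122) * (((24727 : ℝ)/15601)) :=
    mul_le_mul (by linarith only [hra]) hL2 (le_trans (by norm_num) hL1) (by norm_num)
  have hG1g : ((1250028029743973 : ℝ)/714959547328125) ≤ binEntropy (r₀) / 2 + (2 - (r₀)) * Real.logb 2 3 - 1 := by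
    linarith only [hBr1, hp1g]
  have hG2g : binEntropy (r₀) / 2 + (2 - (r₀)) * Real.logb 2 3 - 1 ≤ ((17795958642292557 : ℝ)/10178420021000000) := by
    linarith only [hBr2, hp2g]
  have hA1g : (0.334570008 : ℝ) ≤ Afun (r₀) := by
    have h' : (((18641 : ℝ)/31867)) / (((17795958642292557 : ℝ)/10178420021000000)) ≤ (Real.logb 2 3 - 1) / (binEntropy (r₀) / 2 + (2 - (r₀)) * Real.logb 2 3 - 1) :=
      div_le_div₀ (by linarith only [hL1]) (by linarith only [hL1]) (by linarith only [hG1g]) hG2g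
    have h'' : (0.334570008 : ℝ) ≤ (((18641 : ℝ)/31867)) / (((17795958642292557 : ℝ)/10178420021000000)) := by norm_num
    unfold Afun
    linarith only [h', h'']
  have hA2g : Afun (r₀) ≤ (0.334572119 : ℝ) := by
    have h' : (Real.logb 2 3 - 1) / (binEntropy (r₀) / 2 + (2 - (r₀)) * Real.logb 2 3 - 1) ≤ (((9126 : ℝ)/15601)) / (((1250028029743973 : ℝ)/714959547328125)) :=
      div_le_div₀ (by norm_num) (by linarith only [hL2]) (by norm_num) hG1g
    have h'' : (((9126 : ℝ)/15601)) / (((1250028029743973 : ℝ)/714959547328125)) ≤ (0.334572119 : ℝ) := by norm_num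
    unfold Afun
    linarith only [h', h'']
  have hM1g : (0.192753142 : ℝ) ≤ (r₀) * Afun (r₀) := by
    have h' : (0.576122 : ℝ) * 0.334570008 ≤ (r₀) * Afun (r₀) :=
      mul_le_mul hra hA1g (by norm_num) (by linarith only [hra])
    linarith only [h']
  have hM2g : (r₀) * Afun (r₀) ≤ (0.192756366 : ℝ) := by
    have h' : (r₀) * Afun (r₀) ≤ (0.576128 : ℝ) * 0.334572119 :=
      mul_le_mul hrb hA2g (by linarith only [hA1g]) (by norm_num)
    linarith only [h']

  have hApos : (0 : ℝ) < Afun r₀ := by linarith only [hA1g]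
  refine ⟨r₀ * Afun r₀, Afun r₀, ?_, ?_, ?_, ?_, ?_, ?_, ?_⟩
  · exact mul_pos (by linarith only [hra]) hApos
  · have h' : (0 : ℝ) < (1 - r₀) * Afun r₀ :=
      mul_pos (by linarith only [hrb]) hApos
    linarith only [h']
  · linarith only [hA2g]
  · linarith only [hM2g]
  · have hAne : Afun r₀ ≠ 0 := ne_of_gt hApos
    have hdiv : r₀ * Afun r₀ / Afun r₀ = r₀ := mul_div_cancel_right₀ r₀ hAne
    rw [hdiv]
    have hGne : binEntropy r₀ / 2 + (2 - r₀) * Real.logb 2 3 - 1 ≠ 0 :=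
      ne_of_gt (by linarith only [hG1g])
    have hA : Afun r₀ * (binEntropy r₀ / 2 + (2 - r₀) * Real.logb 2 3 - 1)
        = Real.logb 2 3 - 1 := by
      unfold Afun
      exact div_mul_cancel₀ _ hGne
    linear_combination hA
  · have h := hphi
    unfold phiFun at h
    linarith only [h]
  · have h := hphi
    unfold phiFun at h
    have h1 : binEntropy (Afun r₀) ≤ ((524084704346911 : ℝ)/569948500000000) :=
      le_trans (binEntropy_mono (by linarith only [hA1g]) hA2g (by norm_num)) hH24
    have h2 : (1 - Afun r₀) * Real.logb 2 3 ≤ (1 - (0.334570008 : ℝ)) * (((24727 : ℝ)/15601)) :=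
      mul_le_mul (by linarith only [hA1g]) hL2 (le_trans (by norm_num) hL1) (by norm_num)
    linarith only [h, h1, h2, lg25]
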